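/- Let k be algebraically closed of characteristic p ≠ 2. Every elementary subalgebra ε of sp_{2n}(k) (an abelian Lie subalgebra of pairwise commuting elements whose p-th matrix powers vanish) satisfies dim ε ≤ n(n+1)/2, and this bound is attained by the nilpotent radical of the parabolic subalgebra corresponding to the last simple root, namely the subalgebra of matrices [[0, B],[0, 0]] with B symmetric n×n. -/

import Mathlib

open Matrix Module FiniteDimensional

attribute [local instance 100] LieRing.ofAssociativeRing

set_option maxHeartbeats 4000000
set_option synthInstance.maxHeartbeats 1000000

universe u v

/-- Commuting nilpotent endomorphisms of a nontrivial f.d. space have a common kernel vector. -/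
theorem common_kernel {k : Type u} [Field k] :
    ∀ (d : ℕ) (V : Type v) [AddCommGroup V] [Module k V] [FiniteDimensional k V],
      finrank k V = d → Nontrivial V →
      ∀ S : Set (Module.End k V),
        (∀ X ∈ S, ∀ Y ∈ S, X * Y = Y * X) →
        (∀ X ∈ S, IsNilpotent X) →
        ∃ v : V, v ≠ 0 ∧ ∀ X ∈ S, X v = 0 := by
  intro d
  induction d using Nat.strong_induction_on with
  | _ d IH =>
    intro V _ _ _ hd hV S hcomm hnil
    by_cases hz : ∀ X ∈ S, X = 0
    · obtain ⟨v, w, hvw⟩ := exists_pair_ne V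
      rcases ne_or_eq v 0 with h | h
      · exact ⟨v, h, fun X hX => by rw [hz X hX]; rfl⟩
      · exact ⟨w, by rw [h] at hvw; exact (Ne.symm hvw), fun X hX => by rw [hz X hX]; rfl⟩
    · push_neg at hz
      obtain ⟨X0, hX0S, hX0⟩ := hz
      set K : Submodule k V := LinearMap.ker X0 with hK
      have hKne : K ≠ ⊥ := by
        intro hbot
        have hinj : Function.Injective X0 := by
          rw [← LinearMap.ker_eq_bot]; exact hbot
        have hinjm : ∀ m : ℕ, Function.Injective ⇑(X0 ^ m : Module.End k V) := by
          intro m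
          induction m with
          | zero => simpa [Module.End.one_eq_id] using Function.injective_id
          | succ m ih =>
            rw [pow_succ, Module.End.mul_eq_comp, LinearMap.coe_comp]
            exact Function.Injective.comp ih hinj
        obtain ⟨m, hm⟩ := hnil X0 hX0S
        have := hinjm m
        rw [hm] at this
        obtain ⟨v, w, hvw⟩ := exists_pair_ne V
        exact hvw (this (by simp [LinearMap.zero_apply]))
      have hKtop : K ≠ ⊤ := by
        intro htop
        apply hX0
        ext v
        have : v ∈ K := htop ▸ Submodule.mem_top
        simpa [hK] using this
      have hKlt : finrank k K < d := by
        rw [← hd]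
        exact Submodule.finrank_lt (by simpa [lt_top_iff_ne_top] using hKtop)
      have hKnt : Nontrivial K := by
        rw [Submodule.nontrivial_iff_ne_bot]; exact hKne
      have hmaps : ∀ X ∈ S, ∀ x ∈ K, X x ∈ K := by
        intro X hX x hx
        have hc : X0 (X x) = X (X0 x) := by
          have h := hcomm X0 hX0S X hX
          calc X0 (X x) = (X0 * X) x := rfl
            _ = (X * X0) x := by rw [h]
            _ = X (X0 x) := rfl
        simp only [hK, LinearMap.mem_ker] at hx ⊢
        rw [hc, hx, _root_.map_zero]
      set S' : Set (Module.End k K) :=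
        {Y | ∃ X, ∃ hX : X ∈ S, Y = X.restrict (hmaps X hX)} with hS'
      have hres_pow : ∀ X (hX : X ∈ S) (m : ℕ) (x : K),
          (((X.restrict (hmaps X hX)) ^ m) x : V) = (X ^ m) (x : V) := by
        intro X hX m
        induction m with
        | zero => intro x; simp
        | succ m ih =>
          intro x
          rw [pow_succ', pow_succ', Module.End.mul_apply, Module.End.mul_apply,
            LinearMap.restrict_coe_apply, ih]
      have hcomm' : ∀ Y1 ∈ S', ∀ Y2 ∈ S', Y1 * Y2 = Y2 * Y1 := by
        rintro _ ⟨X1, hX1, rfl⟩ _ ⟨X2, hX2, rfl⟩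
        ext x
        simp only [Module.End.mul_apply, LinearMap.restrict_coe_apply]
        have h := hcomm X1 hX1 X2 hX2
        calc X1 (X2 (x:V)) = (X1 * X2) (x:V) := rfl
          _ = (X2 * X1) (x:V) := by rw [h]
          _ = X2 (X1 (x:V)) := rfl
      have hnil' : ∀ Y ∈ S', IsNilpotent Y := by
        rintro _ ⟨X, hX, rfl⟩
        obtain ⟨m, hm⟩ := hnil X hX
        exact ⟨m, by
          ext x
          rw [hres_pow X hX m x, hm]
          simp⟩
      obtain ⟨v', hv'ne, hv'⟩ := IH (finrank k K) hKlt K rfl hKnt S' hcomm' hnil'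
      refine ⟨(v' : V), by simpa using hv'ne, fun X hX => ?_⟩
      have := hv' (X.restrict (hmaps X hX)) ⟨X, hX, rfl⟩
      have : ((X.restrict (hmaps X hX)) v' : V) = 0 := by rw [this]; rfl
      rwa [LinearMap.restrict_coe_apply] at this


theorem symp_bound {k : Type u} [Field k] (hchar : ∀ x : k, x + x = 0 → x = 0) :
    ∀ (N : ℕ) (V : Type v) [AddCommGroup V] [Module k V] [FiniteDimensional k V]
      (ω : V →ₗ[k] V →ₗ[k] k),
      (∀ x, ω x x = 0) →
      (∀ x : V, ω x = 0 → x = 0) →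
      finrank k V = 2 * N →
      ∀ a : Submodule k (Module.End k V),
        (∀ X ∈ a, ∀ x y, ω (X x) y + ω x (X y) = 0) →
        (∀ X ∈ a, ∀ Y ∈ a, X * Y = Y * X) →
        (∀ X ∈ a, IsNilpotent X) →
        finrank k ↥a ≤ N * (N + 1) / 2 := by
  intro N
  induction N with
  | zero =>
    intro V _ _ _ ω halt hnd hdim a hskew hcomm hnil
    have hV0 : finrank k V = 0 := by simpa using hdim
    have hsV : Subsingleton V := finrank_zero_iff.mp hV0
    have hsE : Subsingleton (Module.End k V) :=
      ⟨fun f g => LinearMap.ext fun x => Subsingleton.elim _ _⟩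
    have : finrank k (Module.End k V) = 0 := finrank_zero_of_subsingleton
    calc finrank k ↥a ≤ finrank k (Module.End k V) := Submodule.finrank_le a
      _ = 0 := this
      _ ≤ _ := Nat.zero_le _
  | succ N IH =>
    intro V _ _ _ ω halt hnd hdim a hskew hcomm hnil
    -- skew-symmetry of ω
    have hωskew : ∀ x y : V, ω x y = - ω y x := by
      intro x y
      have h := halt (x + y)
      simp only [_root_.map_add, LinearMap.add_apply] at h
      rw [halt x, halt y] at h
      linear_combination h
    have hVnt : Nontrivial V := by
      apply nontrivial_of_finrank_pos (R := k)
      rw [hdim]; omega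
    -- common kernel vector
    obtain ⟨v, hvne, hv0⟩ := common_kernel (finrank k V) V rfl hVnt (a : Set (Module.End k V))
      hcomm hnil
    have hωv_ne : ω v ≠ 0 := fun h => hvne (hnd v h)
    -- the hyperplane W = v^⊥
    set W : Submodule k V := LinearMap.ker (ω v) with hWdef
    have hvW : v ∈ W := by simp [hWdef, LinearMap.mem_ker, halt v]
    -- u0 with ω v u0 = 1
    obtain ⟨u, hu⟩ : ∃ u, ω v u ≠ 0 := by
      by_contra h
      push_neg at h
      exact hωv_ne (LinearMap.ext h)
    set u0 : V := (ω v u)⁻¹ • u with hu0def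
    have hωvu0 : ω v u0 = 1 := by
      rw [hu0def, _root_.map_smul, smul_eq_mul, inv_mul_cancel₀ hu]
    -- rank of W
    have hWrank : finrank k W = 2 * N + 1 := by
      have hrange : LinearMap.range (ω v) = ⊤ := by
        rw [eq_top_iff]
        intro c _
        exact ⟨(c * (ω v u)⁻¹) • u, by rw [_root_.map_smul, smul_eq_mul, mul_assoc,
          inv_mul_cancel₀ hu, mul_one]⟩
      have h5 := LinearMap.finrank_range_add_finrank_ker (ω v)
      rw [hrange, finrank_top, finrank_self, hdim] at h5
      rw [hWdef]
      omega
    -- the line M = span v inside W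
    set vW : W := ⟨v, hvW⟩ with hvWdef
    have hvWne : vW ≠ 0 := by
      intro h
      exact hvne (by simpa [hvWdef] using congrArg (Subtype.val) h)
    set M : Submodule k W := Submodule.span k {vW} with hMdef
    have hMrank : finrank k M = 1 := finrank_span_singleton hvWne
    -- the quotient symplectic space W ⧸ M
    have hV'rank : finrank k (W ⧸ M) = 2 * N := by
      have h6 := Submodule.finrank_quotient_add_finrank M
      rw [hMrank, hWrank] at h6
      omega
    -- the induced form ω'
    have hMker : ∀ w : W, M ≤ LinearMap.ker ((ω.domRestrict₁₂ W W) w) := by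
      intro w
      rw [hMdef, Submodule.span_le, Set.singleton_subset_iff]
      simp only [SetLike.mem_coe, LinearMap.mem_ker, LinearMap.domRestrict₁₂_apply]
      rw [hωskew]
      have : ω v (w : V) = 0 := w.2
      rw [this, neg_zero]
    set r2 : W →ₗ[k] ((W ⧸ M) →ₗ[k] k) :=
      { toFun := fun w => M.liftQ ((ω.domRestrict₁₂ W W) w) (hMker w)
        map_add' := by
          intro w1 w2
          apply Submodule.linearMap_qext
          ext x
          simp
        map_smul' := by
          intro c w
          apply Submodule.linearMap_qext
          ext x
          simp } with hr2def
    have hr2M : M ≤ LinearMap.ker r2 := by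
      apply Submodule.span_le.mpr
      rw [Set.singleton_subset_iff]
      simp only [SetLike.mem_coe, LinearMap.mem_ker]
      apply Submodule.linearMap_qext
      ext x
      have hx : ω v (x : V) = 0 := x.2
      simp only [hr2def, LinearMap.coe_mk, AddHom.coe_mk, LinearMap.comp_apply,
        Submodule.mkQ_apply, Submodule.liftQ_apply, LinearMap.zero_comp, LinearMap.zero_apply]
      exact hx
    set ω' : (W ⧸ M) →ₗ[k] (W ⧸ M) →ₗ[k] k := M.liftQ r2 hr2M with hω'def
    have hω'mk : ∀ w x : W,
        ω' (Submodule.Quotient.mk w) (Submodule.Quotient.mk x) = ω (w : V) (x : V) :=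
      fun w x => rfl
    -- ω' is alternating
    have halt' : ∀ x : W ⧸ M, ω' x x = 0 := by
      intro x
      obtain ⟨w, rfl⟩ := Submodule.Quotient.mk_surjective M x
      rw [hω'mk]
      exact halt _
    -- ω' is nondegenerate
    have hnd' : ∀ x : W ⧸ M, ω' x = 0 → x = 0 := by
      intro x hx
      obtain ⟨w, rfl⟩ := Submodule.Quotient.mk_surjective M x
      have hu' : ∀ x : W, ω (w : V) (x : V) = 0 := by
        intro x
        rw [← hω'mk w x, hx]
        rfl
      set c : k := ω (w : V) u0 with hcdef
      have hWmem : ∀ z : V, z - (ω v z) • u0 ∈ W := by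
        intro z
        simp only [hWdef, LinearMap.mem_ker, _root_.map_sub, _root_.map_smul, smul_eq_mul, hωvu0, mul_one,
          sub_self]
      have hfz : ∀ z : V, ω (w : V) z = c * ω v z := by
        intro z
        have h1 : ω (w : V) (z - (ω v z) • u0) = 0 := hu' ⟨_, hWmem z⟩
        rw [_root_.map_sub, _root_.map_smul, smul_eq_mul, sub_eq_zero] at h1
        rw [h1, mul_comm]
      have hwv : (w : V) - c • v = 0 := by
        apply hnd
        apply LinearMap.ext
        intro z
        simp only [_root_.map_sub, _root_.map_smul, LinearMap.sub_apply, LinearMap.smul_apply, smul_eq_mul,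
          LinearMap.zero_apply]
        rw [hfz z]
        ring
      have hwM : w ∈ M := by
        have : (w : V) = c • v := by
          rw [sub_eq_zero] at hwv
          exact hwv
        have hw : w = c • vW := by
          apply Subtype.ext
          simpa [hvWdef] using this
        rw [hMdef]
        rw [hw]
        exact Submodule.smul_mem _ c (Submodule.mem_span_singleton_self vW)
      rwa [Submodule.Quotient.mk_eq_zero]
    -- each X ∈ a maps W into W and kills v
    have hXW : ∀ X ∈ a, ∀ w ∈ W, X w ∈ W := by
      intro X hX w hw
      have h1 := hskew X hX v w
      rw [hv0 X hX] at h1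
      simp only [_root_.map_zero, LinearMap.zero_apply, zero_add] at h1
      simpa [hWdef, LinearMap.mem_ker] using h1
    -- the map π : a → End (W ⧸ M)
    have hres_mem : ∀ (X : Module.End k V) (hX : X ∈ a),
        M ≤ Submodule.comap (X.restrict (fun w hw => hXW X hX w hw)) M := by
      intro X hX
      apply Submodule.span_le.mpr
      rw [Set.singleton_subset_iff]
      simp only [SetLike.mem_coe, Submodule.mem_comap]
      have : X.restrict (fun w hw => hXW X hX w hw) vW = 0 := by
        apply Subtype.ext
        rw [LinearMap.restrict_coe_apply]
        simpa [hvWdef] using hv0 X hX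
      rw [this]
      exact Submodule.zero_mem M
    set π : ↥a →ₗ[k] Module.End k (W ⧸ M) :=
      { toFun := fun X => Submodule.mapQ M M ((X : Module.End k V).restrict
          (fun w hw => hXW X.1 X.2 w hw)) (hres_mem X.1 X.2)
        map_add' := by
          intro X Y
          apply LinearMap.ext
          intro x
          obtain ⟨w, rfl⟩ := Submodule.Quotient.mk_surjective M x
          show Submodule.Quotient.mk _ = _
          rw [LinearMap.add_apply]
          show _ = Submodule.Quotient.mk _ + Submodule.Quotient.mk _
          rw [← Submodule.Quotient.mk_add]
          rfl
        map_smul' := by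
          intro c X
          apply LinearMap.ext
          intro x
          obtain ⟨w, rfl⟩ := Submodule.Quotient.mk_surjective M x
          show Submodule.Quotient.mk _ = _
          rw [RingHom.id_apply, LinearMap.smul_apply]
          show _ = c • Submodule.Quotient.mk _
          rw [← Submodule.Quotient.mk_smul]
          rfl } with hπdef
    have hπ_apply : ∀ (X : ↥a) (w : W),
        π X (Submodule.Quotient.mk w) =
          Submodule.Quotient.mk ((X : Module.End k V).restrict
            (fun w hw => hXW X.1 X.2 w hw) w) := fun X w => rfl
    have hres_pow : ∀ (X : ↥a) (m : ℕ) (w : W),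
        ((((X : Module.End k V).restrict (fun w hw => hXW X.1 X.2 w hw)) ^ m) w : V) =
          ((X : Module.End k V) ^ m) (w : V) := by
      intro X m
      induction m with
      | zero => intro w; simp
      | succ m ih =>
        intro w
        rw [pow_succ', pow_succ', Module.End.mul_apply, Module.End.mul_apply,
          LinearMap.restrict_coe_apply, ih]
    have hπ_pow : ∀ (X : ↥a) (m : ℕ) (w : W),
        ((π X) ^ m) (Submodule.Quotient.mk w) =
          Submodule.Quotient.mk ((((X : Module.End k V).restrict
            (fun w hw => hXW X.1 X.2 w hw)) ^ m) w) := by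
      intro X m
      induction m with
      | zero => intro w; simp
      | succ m ih =>
        intro w
        rw [pow_succ', pow_succ', Module.End.mul_apply, Module.End.mul_apply, ih, hπ_apply]
    -- hypotheses for the range of π
    have hskew' : ∀ T ∈ LinearMap.range π, ∀ x y : W ⧸ M, ω' (T x) y + ω' x (T y) = 0 := by
      rintro _ ⟨X, rfl⟩ x y
      obtain ⟨w, rfl⟩ := Submodule.Quotient.mk_surjective M x
      obtain ⟨u', rfl⟩ := Submodule.Quotient.mk_surjective M y
      rw [hπ_apply, hπ_apply, hω'mk, hω'mk, LinearMap.restrict_coe_apply,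
        LinearMap.restrict_coe_apply]
      exact hskew X.1 X.2 _ _
    have hcomm' : ∀ T ∈ LinearMap.range π, ∀ S ∈ LinearMap.range π, T * S = S * T := by
      rintro _ ⟨X, rfl⟩ _ ⟨Y, rfl⟩
      apply LinearMap.ext
      intro x
      obtain ⟨w, rfl⟩ := Submodule.Quotient.mk_surjective M x
      rw [Module.End.mul_apply, Module.End.mul_apply, hπ_apply, hπ_apply, hπ_apply, hπ_apply]
      congr 1
      apply Subtype.ext
      rw [LinearMap.restrict_coe_apply, LinearMap.restrict_coe_apply,
        LinearMap.restrict_coe_apply, LinearMap.restrict_coe_apply]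
      have h := hcomm X.1 X.2 Y.1 Y.2
      calc (X : Module.End k V) ((Y : Module.End k V) (w : V))
          = ((X : Module.End k V) * (Y : Module.End k V)) (w : V) := rfl
        _ = ((Y : Module.End k V) * (X : Module.End k V)) (w : V) := by rw [h]
        _ = (Y : Module.End k V) ((X : Module.End k V) (w : V)) := rfl
    have hnil' : ∀ T ∈ LinearMap.range π, IsNilpotent T := by
      rintro _ ⟨X, rfl⟩
      obtain ⟨m, hm⟩ := hnil X.1 X.2
      refine ⟨m, ?_⟩
      apply LinearMap.ext
      intro x
      obtain ⟨w, rfl⟩ := Submodule.Quotient.mk_surjective M x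
      rw [hπ_pow]
      have hz : (((X : Module.End k V).restrict (fun w hw => hXW X.1 X.2 w hw)) ^ m) w = 0 := by
        apply Subtype.ext
        rw [hres_pow, hm]
        simp
      rw [hz]
      simp
    have hrange_le := IH (W ⧸ M) ω' halt' hnd' hV'rank (LinearMap.range π)
      hskew' hcomm' hnil'
    -- bounding the kernel of π
    -- the evaluation map Φ at u0
    set Φ : ↥(LinearMap.ker π) →ₗ[k] V :=
      { toFun := fun X => ((X : ↥a) : Module.End k V) u0
        map_add' := fun X Y => rfl
        map_smul' := fun c X => rfl } with hΦdef
    have hWdecomp : ∀ z : V, z - (ω v z) • u0 ∈ W := by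
      intro z
      simp only [hWdef, LinearMap.mem_ker, _root_.map_sub, _root_.map_smul, smul_eq_mul, hωvu0, mul_one,
        sub_self]
    have hkerπ_span : ∀ X : ↥(LinearMap.ker π), ∀ w : W,
        ∃ c : k, ((X : ↥a) : Module.End k V) (w : V) = c • v := by
      intro X w
      have hX0 : π X = 0 := LinearMap.mem_ker.mp X.2
      have h1 : π (X : ↥a) (Submodule.Quotient.mk w) = 0 := by rw [hX0]; rfl
      rw [hπ_apply, Submodule.Quotient.mk_eq_zero] at h1
      obtain ⟨c, hc⟩ := Submodule.mem_span_singleton.mp h1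
      refine ⟨c, ?_⟩
      have := congrArg (Subtype.val) hc
      rw [LinearMap.restrict_coe_apply] at this
      rw [← this]
      rfl
    have hΦker : LinearMap.ker Φ = ⊥ := by
      rw [Submodule.eq_bot_iff]
      intro X hX
      have hXu0 : ((X : ↥a) : Module.End k V) u0 = 0 := hX
      apply Subtype.ext
      apply Subtype.ext
      apply LinearMap.ext
      intro z
      have hw := hWdecomp z
      obtain ⟨c, hc⟩ := hkerπ_span X ⟨_, hw⟩
      have hc' : ((X : ↥a) : Module.End k V) (z - (ω v z) • u0) = c • v := hc
      have hsk := hskew ((X : ↥a) : Module.End k V) (X : ↥a).2 (z - (ω v z) • u0) u0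
      simp only [hXu0, _root_.map_zero, add_zero] at hsk
      have hczero : c = 0 := by
        have h7 : ω (c • v) u0 = 0 := by rw [← hc']; exact hsk
        simpa [hωvu0] using h7
      have hdec : ((X : ↥a) : Module.End k V) z =
          ((X : ↥a) : Module.End k V) (z - (ω v z) • u0) +
            (ω v z) • (((X : ↥a) : Module.End k V) u0) := by
        rw [_root_.map_sub, _root_.map_smul]
        abel
      rw [hdec, hc', hczero, zero_smul, hXu0, smul_zero, add_zero]
      simp
    have hΦinj : Function.Injective Φ := by
      intro x y hxy
      have hm : x - y ∈ LinearMap.ker Φ := by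
        rw [LinearMap.mem_ker]
        have e : Φ (x - y) = Φ x - Φ y := LinearMap.map_sub Φ x y
        rw [e, hxy, sub_self]
      rw [hΦker, Submodule.mem_bot] at hm
      exact sub_eq_zero.mp hm
    -- the range of Φ is isotropic
    have hUiso : ∀ x ∈ LinearMap.range Φ, ∀ y ∈ LinearMap.range Φ, ω x y = 0 := by
      rintro _ ⟨X, rfl⟩ _ ⟨Y, rfl⟩
      have hA : ((X : ↥a) : Module.End k V) ∈ a := (X : ↥a).2
      have hB : ((Y : ↥a) : Module.End k V) ∈ a := (Y : ↥a).2
      have e1 := hskew _ hA u0 (((Y : ↥a) : Module.End k V) u0)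
      have e3 := hskew _ hB u0 (((X : ↥a) : Module.End k V) u0)
      have hcomm_ap : ((X : ↥a) : Module.End k V) (((Y : ↥a) : Module.End k V) u0) =
          ((Y : ↥a) : Module.End k V) (((X : ↥a) : Module.End k V) u0) := by
        have h := hcomm _ hA _ hB
        calc ((X : ↥a) : Module.End k V) (((Y : ↥a) : Module.End k V) u0)
            = (((X : ↥a) : Module.End k V) * ((Y : ↥a) : Module.End k V)) u0 := rfl
          _ = (((Y : ↥a) : Module.End k V) * ((X : ↥a) : Module.End k V)) u0 := by rw [h]
          _ = ((Y : ↥a) : Module.End k V) (((X : ↥a) : Module.End k V) u0) := rfl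
      have hcomm_ap' : ω u0 (((X : ↥a) : Module.End k V) (((Y : ↥a) : Module.End k V) u0)) =
          ω u0 (((Y : ↥a) : Module.End k V) (((X : ↥a) : Module.End k V) u0)) := by
        rw [hcomm_ap]
      have skw := hωskew (((X : ↥a) : Module.End k V) u0) (((Y : ↥a) : Module.End k V) u0)
      have hXu0' := hskew _ hA (((Y : ↥a) : Module.End k V) u0) u0
      have h2t : ω (((X : ↥a) : Module.End k V) u0) (((Y : ↥a) : Module.End k V) u0) +
          ω (((X : ↥a) : Module.End k V) u0) (((Y : ↥a) : Module.End k V) u0) = 0 := by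
        linear_combination e1 - e3 - hcomm_ap' + skw
      exact hchar _ h2t
    -- hence its dimension is at most N + 1
    have hndB : LinearMap.BilinForm.Nondegenerate ω :=
      ⟨fun x h => hnd x (LinearMap.ext h),
        fun y h => hnd y (LinearMap.ext fun x => by rw [hωskew, h x, neg_zero]; rfl)⟩
    have hrefl : LinearMap.IsRefl ω := LinearMap.IsAlt.isRefl halt
    have hUorth : LinearMap.range Φ ≤ LinearMap.BilinForm.orthogonal ω (LinearMap.range Φ) := by
      intro x hx
      rw [LinearMap.BilinForm.mem_orthogonal_iff]
      intro y hy
      exact hUiso y hy x hx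
    have horthrank := LinearMap.BilinForm.finrank_orthogonal hndB (LinearMap.range Φ)
    have hUle : finrank k ↥(LinearMap.range Φ) ≤
        finrank k ↥(LinearMap.BilinForm.orthogonal ω (LinearMap.range Φ)) :=
      Submodule.finrank_mono hUorth
    have hUV : finrank k ↥(LinearMap.range Φ) ≤ finrank k V := Submodule.finrank_le _
    have hUbound : finrank k ↥(LinearMap.range Φ) ≤ N + 1 := by
      rw [horthrank, hdim] at hUle
      rw [hdim] at hUV
      omega
    have hkerrank : finrank k ↥(LinearMap.ker π) ≤ N + 1 := by
      have h8 := LinearMap.finrank_range_of_inj hΦinj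
      omega
    have hrn := LinearMap.finrank_range_add_finrank_ker π
    obtain ⟨P, hP⟩ := Nat.even_mul_succ_self N
    obtain ⟨Q, hQ⟩ := Nat.even_mul_succ_self (N + 1)
    have htri : (N + 1) * (N + 1 + 1) = N * (N + 1) + 2 * (N + 1) := by ring
    rw [hP] at htri hrange_le
    rw [hQ] at htri
    rw [show (N + 1) * (N + 1 + 1) = Q + Q from hQ]
    omega


/-- The submodule of symmetric `n × n` matrices. -/
def symSub (k : Type*) [Field k] (n : ℕ) : Submodule k (Matrix (Fin n) (Fin n) k) where
  carrier := {B | Bᵀ = B}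
  add_mem' := by
    intro B C hB hC
    simp only [Set.mem_setOf_eq, Matrix.transpose_add] at *
    rw [hB, hC]
  zero_mem' := by simp
  smul_mem' := by
    intro c B hB
    simp only [Set.mem_setOf_eq, Matrix.transpose_smul] at *
    rw [hB]

/-- Symmetric matrices are linearly equivalent to functions on ordered pairs. -/
noncomputable def symSubEquiv (k : Type*) [Field k] (n : ℕ) :
    symSub k n ≃ₗ[k] ({ p : Fin n × Fin n // p.1 ≤ p.2 } → k) where
  toFun B p := (B : Matrix (Fin n) (Fin n) k) p.1.1 p.1.2
  map_add' B C := rfl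
  map_smul' c B := rfl
  invFun f :=
    ⟨Matrix.of fun i j => if h : i ≤ j then f ⟨(i, j), h⟩ else f ⟨(j, i), le_of_not_ge h⟩, by
      show Matrix.transpose _ = _
      ext i j
      simp only [Matrix.transpose_apply, Matrix.of_apply]
      rcases le_or_gt i j with h | h
      · rcases eq_or_lt_of_le h with rfl | h'
        · rfl
        · rw [dif_neg (not_le.mpr h'), dif_pos h]
      · rw [dif_pos h.le, dif_neg (not_le.mpr h)]⟩
  left_inv := by
    intro B
    apply Subtype.ext
    ext i j
    simp only [Matrix.of_apply]
    rcases le_or_gt i j with h | h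
    · rw [dif_pos h]
    · rw [dif_neg (not_le.mpr h)]
      have hB : (B : Matrix (Fin n) (Fin n) k)ᵀ = (B : Matrix (Fin n) (Fin n) k) := B.2
      calc (B : Matrix (Fin n) (Fin n) k) j i
          = (B : Matrix (Fin n) (Fin n) k)ᵀ i j := rfl
        _ = (B : Matrix (Fin n) (Fin n) k) i j := by rw [hB]
  right_inv := by
    intro f
    ext p
    obtain ⟨⟨i, j⟩, h⟩ := p
    simp only [Matrix.of_apply]
    rw [dif_pos h]

theorem symSub_finrank (k : Type*) [Field k] (n : ℕ) :
    finrank k (symSub k n) = n * (n + 1) / 2 := by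
  rw [LinearEquiv.finrank_eq (symSubEquiv k n)]
  rw [Module.finrank_pi]
  rw [← Fintype.card_congr (Sym2.sortEquiv (α := Fin n))]
  rw [Sym2.card]
  simp only [Fintype.card_fin]
  rw [Nat.choose_two_right]
  simp [Nat.mul_comm]


theorem symSub_mem {k : Type*} [Field k] {n : ℕ} (B : Matrix (Fin n) (Fin n) k) :
    B ∈ symSub k n ↔ Bᵀ = B := Iff.rfl

/-- The matrix of the standard symplectic form, `[[0, I],[-I, 0]]`. -/
def Jstd (k : Type*) [Field k] (n : ℕ) :
    Matrix (Fin n ⊕ Fin n) (Fin n ⊕ Fin n) k :=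
  Matrix.fromBlocks 0 1 (-1) 0

/-- The set of block matrices `[[0, B],[0, 0]]` with `B` symmetric `n × n`:
the nilpotent radical of the parabolic of `sp_{2n}` at the last simple root. -/
def symBlockSet (k : Type*) [Field k] (n : ℕ) :
    Set (Matrix (Fin n ⊕ Fin n) (Fin n ⊕ Fin n) k) :=
  {X | ∃ B : Matrix (Fin n) (Fin n) k, Bᵀ = B ∧ X = Matrix.fromBlocks 0 B 0 0}

section Aux

variable {k : Type u} [Field k] {n : ℕ}

theorem Jstd_transpose : (Jstd k n)ᵀ = -(Jstd k n) := by
  simp only [Jstd, Matrix.fromBlocks_transpose, Matrix.transpose_zero, Matrix.transpose_one,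
    Matrix.transpose_neg]
  ext (i | i) (j | j) <;> simp [Matrix.fromBlocks]

theorem Jstd_mul_Jstd : (Jstd k n) * (Jstd k n) = -1 := by
  rw [Jstd, Matrix.fromBlocks_multiply]
  ext (i | i) (j | j) <;> simp [Matrix.fromBlocks, Matrix.one_apply]

theorem dp_transpose {ι : Type*} [Fintype ι] (M : Matrix ι ι k) (x z : ι → k) :
    (M *ᵥ x) ⬝ᵥ z = x ⬝ᵥ (Mᵀ *ᵥ z) := by
  rw [Matrix.dotProduct_mulVec, Matrix.vecMul_transpose, dotProduct_comm]

/-- The symplectic bilinear form on `(Fin n ⊕ Fin n) → k`. -/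
noncomputable def ωJ (k : Type u) [Field k] (n : ℕ) :
    ((Fin n ⊕ Fin n) → k) →ₗ[k] ((Fin n ⊕ Fin n) → k) →ₗ[k] k :=
  LinearMap.mk₂ k (fun x y => x ⬝ᵥ ((Jstd k n) *ᵥ y))
    (fun x x' y => by simp only [add_dotProduct])
    (fun c x y => by simp only [smul_dotProduct])
    (fun x y y' => by simp only [Matrix.mulVec_add, dotProduct_add])
    (fun c x y => by simp only [Matrix.mulVec_smul, dotProduct_smul])

theorem ωJ_apply (x y : (Fin n ⊕ Fin n) → k) : ωJ k n x y = x ⬝ᵥ ((Jstd k n) *ᵥ y) := rfl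

theorem ωJ_skew (x y : (Fin n ⊕ Fin n) → k) : ωJ k n x y = -(ωJ k n y x) := by
  rw [ωJ_apply, ωJ_apply, dotProduct_comm, dp_transpose, Jstd_transpose,
    Matrix.neg_mulVec, dotProduct_neg]

theorem ωJ_alt (hchar : ∀ x : k, x + x = 0 → x = 0) (x : (Fin n ⊕ Fin n) → k) :
    ωJ k n x x = 0 := by
  apply hchar
  have h := ωJ_skew (k := k) (n := n) x x
  linear_combination h

theorem ωJ_nondeg (x : (Fin n ⊕ Fin n) → k) (h : ωJ k n x = 0) : x = 0 := by
  funext i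
  have h1 : ωJ k n x (-((Jstd k n) *ᵥ (Pi.single i 1))) = 0 := by rw [h]; rfl
  rw [ωJ_apply, Matrix.mulVec_neg, Matrix.mulVec_mulVec, Jstd_mul_Jstd,
    Matrix.neg_mulVec, neg_neg, Matrix.one_mulVec, dotProduct_single, mul_one] at h1
  simpa using h1

end Aux

/-- every elementary subalgebra of `sp_{2n}(k)` (char `p ≠ 2`) has
dimension at most `n(n+1)/2`, and the bound is attained by the subalgebra of
matrices `[[0, B],[0, 0]]` with `B` symmetric. -/
theorem stmt_7 {k : Type*} [Field k] [IsAlgClosed k] {p : ℕ} [Fact p.Prime] [CharP k p]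
    (hp : p ≠ 2) (n : ℕ) (hn : 1 ≤ n) :
    (∀ ε : LieSubalgebra k (Matrix (Fin n ⊕ Fin n) (Fin n ⊕ Fin n) k),
       (∀ X ∈ ε, Xᵀ * Jstd k n + Jstd k n * X = 0) →
       (∀ X ∈ ε, ∀ Y ∈ ε, ⁅X, Y⁆ = 0) →
       (∀ X ∈ ε, X ^ p = 0) →
       Module.finrank k ε ≤ n * (n + 1) / 2)
    ∧
    (∃ ε : LieSubalgebra k (Matrix (Fin n ⊕ Fin n) (Fin n ⊕ Fin n) k),
       (ε : Set (Matrix (Fin n ⊕ Fin n) (Fin n ⊕ Fin n) k)) = symBlockSet k n ∧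
       (∀ X ∈ ε, Xᵀ * Jstd k n + Jstd k n * X = 0) ∧
       (∀ X ∈ ε, ∀ Y ∈ ε, ⁅X, Y⁆ = 0) ∧
       (∀ X ∈ ε, X ^ p = 0) ∧
       Module.finrank k ε = n * (n + 1) / 2) := by
  have hp2 : (2 : k) ≠ 0 := by
    intro h
    have h2 := (CharP.cast_eq_zero_iff k p 2).mp (by exact_mod_cast h)
    have hpp : p.Prime := Fact.out
    exact hp ((Nat.prime_dvd_prime_iff_eq hpp Nat.prime_two).mp h2)
  have hchar : ∀ x : k, x + x = 0 → x = 0 := by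
    intro x hx
    have h2x : (2 : k) * x = 0 := by rw [two_mul]; exact hx
    rcases mul_eq_zero.mp h2x with h | h
    · exact absurd h hp2
    · exact h
  have hppr : p.Prime := Fact.out
  constructor
  · -- Part 1: the upper bound
    intro ε hsp hab hpow
    set E := Matrix.toLinAlgEquiv' (R := k) (n := Fin n ⊕ Fin n) with hEdef
    set a : Submodule k (((Fin n ⊕ Fin n) → k) →ₗ[k] ((Fin n ⊕ Fin n) → k)) :=
      Submodule.map E.toLinearEquiv.toLinearMap ε.toSubmodule with hadef
    have hmem : ∀ T, T ∈ a → ∃ X ∈ ε, E X = T := by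
      intro T hT
      obtain ⟨X, hX, rfl⟩ := Submodule.mem_map.mp hT
      exact ⟨X, hX, rfl⟩
    have hskew : ∀ T ∈ a, ∀ x y, ωJ k n (T x) y + ωJ k n x (T y) = 0 := by
      intro T hT x y
      obtain ⟨X, hX, rfl⟩ := hmem T hT
      have hEX : ∀ z, E X z = X *ᵥ z := fun z => Matrix.toLinAlgEquiv'_apply X z
      rw [hEX, hEX, ωJ_apply, ωJ_apply, dp_transpose, Matrix.mulVec_mulVec,
        Matrix.mulVec_mulVec, ← dotProduct_add, ← Matrix.add_mulVec,
        hsp X hX, Matrix.zero_mulVec, dotProduct_zero]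
    have hcomm : ∀ T ∈ a, ∀ S ∈ a, T * S = S * T := by
      intro T hT S hS
      obtain ⟨X, hX, rfl⟩ := hmem T hT
      obtain ⟨Y, hY, rfl⟩ := hmem S hS
      have h := hab X hX Y hY
      rw [Ring.lie_def, sub_eq_zero] at h
      rw [← _root_.map_mul, ← _root_.map_mul, h]
    have hnil : ∀ T ∈ a, IsNilpotent T := by
      intro T hT
      obtain ⟨X, hX, rfl⟩ := hmem T hT
      exact ⟨p, by rw [← _root_.map_pow, hpow X hX, _root_.map_zero]⟩
    have hdim : finrank k ((Fin n ⊕ Fin n) → k) = 2 * n := by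
      rw [Module.finrank_pi]
      simp [Fintype.card_sum, two_mul]
    have hbound := symp_bound hchar n ((Fin n ⊕ Fin n) → k) (ωJ k n)
      (ωJ_alt hchar) ωJ_nondeg hdim a hskew hcomm hnil
    have hfr : Module.finrank k ↥ε = finrank k ↥a := by
      rw [hadef, LinearEquiv.finrank_map_eq]
      rfl
    rw [hfr]
    exact hbound
  · -- Part 2: the symmetric-block subalgebra
    set L : Matrix (Fin n) (Fin n) k →ₗ[k]
        Matrix (Fin n ⊕ Fin n) (Fin n ⊕ Fin n) k :=
      { toFun := fun B => Matrix.fromBlocks 0 B 0 0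
        map_add' := by
          intro B C
          show Matrix.fromBlocks 0 (B + C) 0 0 =
            Matrix.fromBlocks 0 B 0 0 + Matrix.fromBlocks 0 C 0 0
          ext (i | i) (j | j) <;> simp [Matrix.fromBlocks]
        map_smul' := by
          intro c B
          show Matrix.fromBlocks 0 (c • B) 0 0 = c • Matrix.fromBlocks 0 B 0 0
          ext (i | i) (j | j) <;> simp [Matrix.fromBlocks] } with hLdef
    set εsub : Submodule k (Matrix (Fin n ⊕ Fin n) (Fin n ⊕ Fin n) k) :=
      (symSub k n).map L with hεsubdef
    have hmem : ∀ X, X ∈ εsub ↔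
        ∃ B : Matrix (Fin n) (Fin n) k, Bᵀ = B ∧ X = Matrix.fromBlocks 0 B 0 0 := by
      intro X
      rw [hεsubdef, Submodule.mem_map]
      constructor
      · rintro ⟨B, hB, rfl⟩
        exact ⟨B, (symSub_mem B).mp hB, rfl⟩
      · rintro ⟨B, hB, rfl⟩
        exact ⟨B, (symSub_mem B).mpr hB, rfl⟩
    have hprod : ∀ B C : Matrix (Fin n) (Fin n) k,
        (Matrix.fromBlocks 0 B 0 0 : Matrix (Fin n ⊕ Fin n) (Fin n ⊕ Fin n) k) *
          Matrix.fromBlocks 0 C 0 0 = 0 := by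
      intro B C
      rw [Matrix.fromBlocks_multiply]
      ext (i | i) (j | j) <;> simp [Matrix.fromBlocks]
    set εlie : LieSubalgebra k (Matrix (Fin n ⊕ Fin n) (Fin n ⊕ Fin n) k) :=
      { εsub with
        lie_mem' := by
          intro x y hx hy
          have hx' : x ∈ εsub := hx
          have hy' : y ∈ εsub := hy
          obtain ⟨B, hB, rfl⟩ := (hmem x).mp hx'
          obtain ⟨C, hC, rfl⟩ := (hmem y).mp hy'
          show ⁅_, _⁆ ∈ εsub
          rw [Ring.lie_def, hprod, hprod, sub_zero]
          exact εsub.zero_mem } with hεliedef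
    have hmem' : ∀ X, X ∈ εlie ↔ X ∈ εsub := fun X => Iff.rfl
    refine ⟨εlie, ?_, ?_, ?_, ?_, ?_⟩
    · ext X
      rw [SetLike.mem_coe, hmem', hmem]
      rfl
    · intro X hX
      obtain ⟨B, hB, rfl⟩ := (hmem X).mp ((hmem' X).mp hX)
      rw [Jstd, Matrix.fromBlocks_transpose, Matrix.fromBlocks_multiply,
        Matrix.fromBlocks_multiply, Matrix.fromBlocks_add]
      ext (i | i) (j | j) <;>
        simp [Matrix.fromBlocks, ← Matrix.transpose_apply B, hB]
    · intro X hX Y hY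
      obtain ⟨B, hB, rfl⟩ := (hmem X).mp ((hmem' X).mp hX)
      obtain ⟨C, hC, rfl⟩ := (hmem Y).mp ((hmem' Y).mp hY)
      rw [Ring.lie_def, hprod, hprod, sub_zero]
    · intro X hX
      obtain ⟨B, hB, rfl⟩ := (hmem X).mp ((hmem' X).mp hX)
      have hsq : (Matrix.fromBlocks 0 B 0 0 : Matrix (Fin n ⊕ Fin n) (Fin n ⊕ Fin n) k) ^ 2
          = 0 := by
        rw [sq, hprod]
      have hpe : p = (p - 2) + 2 := by have := hppr.two_le; omega
      rw [hpe, pow_add, hsq, mul_zero]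
    · have hLinj : Function.Injective L := by
        intro B C h
        have h12 := congrArg Matrix.toBlocks₁₂ h
        simpa [hLdef, Matrix.toBlocks_fromBlocks₁₂] using h12
      have hfr : Module.finrank k ↥εlie = finrank k ↥εsub := rfl
      rw [hfr, hεsubdef,
        ← LinearEquiv.finrank_eq (Submodule.equivMapOfInjective L hLinj (symSub k n))]
      exact symSub_finrank k n
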